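/- Let H be a factorial commutative cancellative monoid and M a submonoid of H containing every unit of H. Then the following are equivalent: (i) for every a ∈ H and every square-free b ∈ H, a²·b ∈ M implies a ∈ M and a·b ∈ M; (iii) for every n ≥ 1 and square-free elements s₁,…,sₙ ∈ H that are pairwise relatively prime in H, if s₁·s₂²·s₃³·⋯·sₙⁿ ∈ M then for every k = 1,…,n the tail product sₖ·sₖ₊₁·⋯·sₙ belongs to M. -/

import Mathlib

open Finset

section Aux
variable {H : Type*} [CancelCommMonoid H]

/-- prime predicate in a mere monoid -/
def PrEl (p : H) : Prop := ¬ IsUnit p ∧ ∀ b c : H, p ∣ b * c → p ∣ b ∨ p ∣ c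

abbrev HFact (H : Type*) [CancelCommMonoid H] : Prop :=
  ∀ a : H, IsUnit a ∨ ∃ l : Multiset H, (∀ p ∈ l, PrEl p) ∧ l.prod = a

theorem prel_dvd_pow {p q : H} (hq : PrEl q) {n : ℕ} (h : q ∣ p ^ n) : q ∣ p := by
  induction n with
  | zero => exact absurd (isUnit_of_dvd_one (by simpa using h)) hq.1
  | succ n ih =>
    rcases hq.2 _ _ (by rw [pow_succ] at h; exact (mul_comm (p^n) p ▸ h)) with h1 | h1
    · exact h1
    · exact ih h1

theorem unit_or_assoc_of_dvd_prel {d p : H} (hp : PrEl p) (h : d ∣ p) :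
    IsUnit d ∨ Associated d p := by
  obtain ⟨c, hc⟩ := h
  rcases hp.2 d c (hc ▸ dvd_refl p) with h1 | h1
  · obtain ⟨k, hk⟩ := h1
    have hkc : k * c = 1 := by
      have : p * 1 = p * (k * c) := by
        rw [mul_one]; nth_rewrite 1 [hc, hk]; rw [mul_assoc]
      exact (mul_left_cancel this).symm
    have hcu : IsUnit c := IsUnit.of_mul_eq_one k (by rw [mul_comm]; exact hkc)
    right
    exact ⟨hcu.unit, by rw [IsUnit.unit_spec]; exact hc.symm⟩
  · obtain ⟨k, hk⟩ := h1
    left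
    have hdk : p = d * (p * k) := by
      calc p = d * c := hc
        _ = d * (p * k) := by rw [hk]
    have : d * k = 1 := by
      have : p * (d * k) = p * 1 := by
        rw [mul_one]
        calc p * (d * k) = d * (p * k) := by rw [← mul_assoc, ← mul_assoc, mul_comm p d]
          _ = p := hdk.symm
      exact mul_left_cancel this
    exact IsUnit.of_mul_eq_one k this

theorem assoc_of_prel_dvd_prel {q p : H} (hq : PrEl q) (hp : PrEl p) (h : q ∣ p) :
    Associated q p :=
  (unit_or_assoc_of_dvd_prel hp h).resolve_left hq.1

theorem prel_dvd_multiset_prod {p : H} (hp : PrEl p) {l : Multiset H} (h : p ∣ l.prod) :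
    ∃ q ∈ l, p ∣ q := by
  induction l using Multiset.induction with
  | empty => exact absurd (isUnit_of_dvd_one (by simpa using h)) hp.1
  | cons a l ih =>
    rw [Multiset.prod_cons] at h
    rcases hp.2 _ _ h with h1 | h1
    · exact ⟨a, Multiset.mem_cons_self a l, h1⟩
    · obtain ⟨q, hq, hq2⟩ := ih h1
      exact ⟨q, Multiset.mem_cons_of_mem hq, hq2⟩

theorem prel_dvd_finset_prod {ι : Type*} {p : H} (hp : PrEl p) {s : Finset ι} {f : ι → H}
    (h : p ∣ ∏ i ∈ s, f i) : ∃ i ∈ s, p ∣ f i := by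
  classical
  induction s using Finset.induction with
  | empty => exact absurd (isUnit_of_dvd_one (by simpa using h)) hp.1
  | insert _ _ hx ih =>
    rename_i a s
    rw [Finset.prod_insert hx] at h
    rcases hp.2 _ _ h with h1 | h1
    · exact ⟨a, Finset.mem_insert_self a s, h1⟩
    · obtain ⟨i, hi, hi2⟩ := ih h1
      exact ⟨i, Finset.mem_insert_of_mem hi, hi2⟩

theorem isUnit_of_no_prel (hfact : HFact H) {c : H} (h : ∀ p : H, PrEl p → ¬ p ∣ c) :
    IsUnit c := by
  rcases hfact c with hc | ⟨l, hl, hl2⟩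
  · exact hc
  · rcases Multiset.empty_or_exists_mem l with rfl | ⟨p, hpl⟩
    · simpa using hl2 ▸ isUnit_one
    · exact absurd (hl2 ▸ Multiset.dvd_prod hpl) (h p (hl p hpl))

end Aux

section Aux2
variable {H : Type*} [CancelCommMonoid H]

theorem prel_pow_succ_dvd {p y : H} {k : ℕ} (h : p ^ (k+1) ∣ p ^ k * y) :
    p ∣ y := by
  obtain ⟨d, hd⟩ := h
  have : p ^ k * y = p ^ k * (p * d) := by
    rw [hd, pow_succ]; simp [mul_assoc, mul_comm, mul_left_comm]
  exact ⟨d, mul_left_cancel this⟩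

theorem sq_mul_of_relprime (hfact : HFact H) {x y : H} (hx : Squarefree x) (hy : Squarefree y)
    (hxy : IsRelPrime x y) : Squarefree (x * y) := by
  intro c hc
  apply isUnit_of_no_prel hfact
  intro p hp hpc
  obtain ⟨d, hd⟩ := hpc
  have hp2 : p ^ 2 ∣ x * y := by
    refine dvd_trans ⟨d * d, ?_⟩ hc
    rw [hd, sq]; simp [mul_assoc, mul_comm, mul_left_comm]
  have hpxy : p ∣ x * y := dvd_trans (dvd_pow_self p two_ne_zero) hp2
  have key : ∀ u v : H, IsRelPrime u v → Squarefree u → p ∣ u → p ^ 2 ∣ u * v → False := by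
    intro u v huv hu hpu h2
    have hpv : ¬ p ∣ v := fun hv => hp.1 (huv hpu hv)
    obtain ⟨u', hu'⟩ := hpu
    have hdvd : p ∣ u' * v := by
      apply prel_pow_succ_dvd (k := 1)
      rw [pow_one, ← mul_assoc, ← hu']; exact h2
    rcases hp.2 _ _ hdvd with h3 | h3
    · obtain ⟨w, hw⟩ := h3
      have : p * p ∣ u := ⟨w, by rw [hu', hw, mul_assoc]⟩
      exact hp.1 (hu p this)
    · exact hpv h3
  rcases hp.2 _ _ hpxy with h1 | h1
  · exact absurd (key x y hxy hx h1 hp2) (fun h => h)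
  · exact absurd (key y x hxy.symm hy h1 (by rwa [mul_comm])) (fun h => h)

theorem relprime_mul_left (hfact : HFact H) {x y z : H} (h1 : IsRelPrime x z)
    (h2 : IsRelPrime y z) : IsRelPrime (x * y) z := by
  intro d hd1 hd2
  apply isUnit_of_no_prel hfact
  intro p hp hpd
  have hpxy : p ∣ x * y := hpd.trans hd1
  have hpz : p ∣ z := hpd.trans hd2
  rcases hp.2 _ _ hpxy with h | h
  · exact hp.1 (h1 h hpz)
  · exact hp.1 (h2 h hpz)

theorem relprime_prod_left (hfact : HFact H) {ι : Type*} {s : Finset ι} {f : ι → H} {z : H}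
    (h : ∀ i ∈ s, IsRelPrime (f i) z) : IsRelPrime (∏ i ∈ s, f i) z := by
  classical
  induction s using Finset.induction with
  | empty => simpa using isRelPrime_one_left
  | insert _ _ hx ih =>
    rename_i a s
    rw [Finset.prod_insert hx]
    exact relprime_mul_left hfact (h a (Finset.mem_insert_self a s))
      (ih fun i hi => h i (Finset.mem_insert_of_mem hi))

theorem relprime_prod_prod (hfact : HFact H) {ι κ : Type*} {s : Finset ι} {t : Finset κ}
    {f : ι → H} {g : κ → H} (h : ∀ i ∈ s, ∀ j ∈ t, IsRelPrime (f i) (g j)) :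
    IsRelPrime (∏ i ∈ s, f i) (∏ j ∈ t, g j) := by
  apply relprime_prod_left hfact
  intro i hi
  exact (relprime_prod_left hfact (fun j hj => (h i hi j hj).symm)).symm

theorem relprime_pow (hfact : HFact H) {x z : H} (h : IsRelPrime x z) (k : ℕ) :
    IsRelPrime (x ^ k) z := by
  induction k with
  | zero => simpa using isRelPrime_one_left
  | succ k ih => rw [pow_succ]; exact relprime_mul_left hfact ih h

theorem sq_prod_of_relprime (hfact : HFact H) {ι : Type*} {s : Finset ι} {f : ι → H}
    (hsq : ∀ i ∈ s, Squarefree (f i))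
    (hrel : ∀ i ∈ s, ∀ j ∈ s, i ≠ j → IsRelPrime (f i) (f j)) :
    Squarefree (∏ i ∈ s, f i) := by
  classical
  induction s using Finset.induction with
  | empty => simpa using squarefree_one
  | insert _ _ hx ih =>
    rename_i a s
    rw [Finset.prod_insert hx]
    refine sq_mul_of_relprime hfact (hsq a (Finset.mem_insert_self a s))
      (ih (fun i hi => hsq i (Finset.mem_insert_of_mem hi))
        (fun i hi j hj hij => hrel i (Finset.mem_insert_of_mem hi) j
          (Finset.mem_insert_of_mem hj) hij)) ?_
    exact (relprime_prod_left hfact (fun i hi => hrel i (Finset.mem_insert_of_mem hi) a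
      (Finset.mem_insert_self a s) (fun he => hx (he ▸ hi)))).symm

theorem sq_of_prel {p : H} (hp : PrEl p) : Squarefree p := by
  intro c hc
  rcases unit_or_assoc_of_dvd_prel hp (dvd_trans (dvd_mul_right c c) hc) with h | h
  · exact h
  · obtain ⟨u, hu⟩ := h
    obtain ⟨d, hd⟩ := hc
    have : c * (c * d) = c * (u : H) := by rw [← mul_assoc, ← hd, hu]
    have hcd : c * d = (u : H) := mul_left_cancel this
    exact isUnit_of_dvd_unit ⟨d, hcd.symm⟩ u.isUnit

theorem relprime_of_not_assoc {p q : H} (hp : PrEl p) (hq : PrEl q)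
    (h : ¬ Associated p q) : IsRelPrime p q := by
  intro d hdp hdq
  rcases unit_or_assoc_of_dvd_prel hp hdp with h1 | h1
  · exact h1
  rcases unit_or_assoc_of_dvd_prel hq hdq with h2 | h2
  · exact h2
  exact absurd (h1.symm.trans h2) h

end Aux2

section Aux3
variable {H : Type*} [CancelCommMonoid H]

theorem prel_of_assoc {p q : H} (hp : PrEl p) (h : Associated p q) : PrEl q := by
  obtain ⟨u, hu⟩ := h
  constructor
  · intro hq
    exact hp.1 (by
      have : p = q * (u⁻¹ : Hˣ) := by rw [← hu]; simp [mul_assoc]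
      rw [this]; exact hq.mul (u⁻¹).isUnit)
  · intro b c hbc
    have hpq : p ∣ q := ⟨u, hu.symm⟩
    rcases hp.2 b c (dvd_trans hpq hbc) with h1 | h1
    · left; exact dvd_trans (⟨(u⁻¹ : Hˣ), by rw [← hu]; simp [mul_assoc]⟩ : q ∣ p) h1
    · right; exact dvd_trans (⟨(u⁻¹ : Hˣ), by rw [← hu]; simp [mul_assoc]⟩ : q ∣ p) h1

theorem prod_assoc_pow {p : H} (l : Multiset H) (h : ∀ x ∈ l, Associated p x) :
    ∃ u : H, IsUnit u ∧ l.prod = p ^ Multiset.card l * u := by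
  induction l using Multiset.induction with
  | empty => exact ⟨1, isUnit_one, by simp⟩
  | cons a l ih =>
    obtain ⟨u, hu, hprod⟩ := ih (fun x hx => h x (Multiset.mem_cons_of_mem hx))
    obtain ⟨v, hv⟩ := h a (Multiset.mem_cons_self a l)
    refine ⟨(v : H) * u, (v.isUnit).mul hu, ?_⟩
    rw [Multiset.prod_cons, hprod, ← hv]
    simp [pow_succ, mul_assoc, mul_comm, mul_left_comm]

/-- representation: every element is a unit times a product of pairwise
non-associated prime powers with positive exponents -/
theorem exists_rep (hfact : HFact H) (c : H) :
    ∃ (r : ℕ) (p : Fin r → H) (e : Fin r → ℕ) (u : H), IsUnit u ∧ (∀ i, PrEl (p i)) ∧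
      (∀ i, 1 ≤ e i) ∧ (∀ i j, i ≠ j → ¬ Associated (p i) (p j)) ∧
      c = u * ∏ i, p i ^ e i := by
  classical
  rcases hfact c with hc | ⟨l, hl, hl2⟩
  · exact ⟨0, ![], ![], c, hc, fun i => i.elim0, fun i => i.elim0, fun i => i.elim0, by simp⟩
  · subst hl2
    clear hfact
    induction l using Multiset.strongInductionOn with
    | _ l ih =>
    rcases Multiset.empty_or_exists_mem l with rfl | ⟨q, hql⟩
    · exact ⟨0, ![], ![], 1, isUnit_one, fun i => i.elim0, fun i => i.elim0,
        fun i => i.elim0, by simp⟩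
    · obtain ⟨l₀, rfl⟩ := Multiset.exists_cons_of_mem hql
      have hq : PrEl q := hl q (Multiset.mem_cons_self q l₀)
      set l₁ := l₀.filter (Associated q) with hl₁def
      set l₂ := l₀.filter (fun x => ¬ Associated q x) with hl₂def
      have hsplit : l₁ + l₂ = l₀ := Multiset.filter_add_not _ l₀
      have hl₂lt : l₂ < q ::ₘ l₀ :=
        lt_of_le_of_lt (Multiset.filter_le _ l₀) (Multiset.lt_cons_self l₀ q)
      have hl₂primes : ∀ x ∈ l₂, PrEl x := fun x hx =>
        hl x (Multiset.mem_cons_of_mem (Multiset.mem_of_mem_filter hx))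
      obtain ⟨r', p', e', u', hu', hp', he', hassoc', hprod'⟩ := ih l₂ hl₂lt hl₂primes
      obtain ⟨u₁, hu₁, hprod₁⟩ := prod_assoc_pow l₁ (fun x hx => Multiset.of_mem_filter hx)
      -- key: no p' i is associated to q
      have hp'dvd : ∀ i, p' i ∣ l₂.prod := by
        intro i
        rw [hprod']
        exact Dvd.dvd.mul_left (dvd_trans (dvd_pow_self (p' i) (Nat.one_le_iff_ne_zero.mp (he' i)))
          (Finset.dvd_prod_of_mem (fun i => p' i ^ e' i) (Finset.mem_univ i))) u'
      have hnassoc : ∀ i, ¬ Associated q (p' i) := by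
        intro i hA
        have hqdvd : q ∣ l₂.prod := dvd_trans hA.dvd (hp'dvd i)
        obtain ⟨x, hx, hqx⟩ := prel_dvd_multiset_prod hq hqdvd
        have hxl : Associated q x :=
          assoc_of_prel_dvd_prel hq (hl₂primes x hx) hqx
        exact (Multiset.of_mem_filter (s := l₀) hx) hxl
      refine ⟨r' + 1, Fin.cons q p', Fin.cons (1 + Multiset.card l₁) e', u₁ * u',
        hu₁.mul hu', ?_, ?_, ?_, ?_⟩
      · intro i
        refine Fin.cases ?_ ?_ i
        · simpa using hq
        · intro j; simpa using hp' j
      · intro i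
        refine Fin.cases ?_ ?_ i
        · simp
        · intro j; simpa using he' j
      · intro i j hij
        rcases Fin.eq_zero_or_eq_succ i with rfl | ⟨i', rfl⟩ <;>
          rcases Fin.eq_zero_or_eq_succ j with rfl | ⟨j', rfl⟩
        · exact absurd rfl hij
        · simpa using hnassoc j'
        · simpa using fun h => hnassoc i' h.symm
        · have hne : i' ≠ j' := fun h => hij (by rw [h])
          simpa using hassoc' i' j' hne
      · rw [Multiset.prod_cons, ← hsplit, Multiset.prod_add, hprod₁, hprod']
        rw [Fin.prod_univ_succ]
        simp only [Fin.cons_zero, Fin.cons_succ]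
        rw [pow_add, pow_one]
        simp [mul_assoc, mul_comm, mul_left_comm]

end Aux3

section Aux4
variable {H : Type*} [CancelCommMonoid H]

theorem exists_max_pow_aux {p : H} (hp : PrEl p) :
    ∀ N (l : Multiset H), Multiset.card l ≤ N → (∀ q ∈ l, PrEl q) →
      ∃ k y, l.prod = p ^ k * y ∧ ¬ p ∣ y := by
  intro N
  induction N with
  | zero =>
    intro l hcard _
    have : l = 0 := Multiset.card_eq_zero.mp (Nat.le_zero.mp hcard)
    subst this
    exact ⟨0, 1, by simp, fun h => hp.1 (isUnit_of_dvd_one (by simpa using h))⟩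
  | succ N ihN =>
    intro l hcard hl
    by_cases hdvd : p ∣ l.prod
    · obtain ⟨q, hql, hpq⟩ := prel_dvd_multiset_prod hp hdvd
      have hassoc : Associated p q := assoc_of_prel_dvd_prel hp (hl q hql) hpq
      obtain ⟨v, hv⟩ := hassoc
      obtain ⟨l', rfl⟩ := Multiset.exists_cons_of_mem hql
      rcases Multiset.empty_or_exists_mem l' with rfl | ⟨a, hal'⟩
      · refine ⟨1, (v : H), ?_, ?_⟩
        · simp [← hv]
        · exact fun h => hp.1 (isUnit_of_dvd_unit h v.isUnit)
      · obtain ⟨l'', rfl⟩ := Multiset.exists_cons_of_mem hal'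
        set m := ((v : H) * a) ::ₘ l'' with hm
        have hmcard : Multiset.card m ≤ N := by
          simp only [hm, Multiset.card_cons]
          have := hcard
          simp only [Multiset.card_cons] at this
          omega
        have hmprimes : ∀ q' ∈ m, PrEl q' := by
          intro q' hq'
          rcases Multiset.mem_cons.mp hq' with rfl | hq'
          · exact prel_of_assoc (hl a (by simp)) ⟨v, mul_comm a (v : H)⟩
          · exact hl q' (by simp [Multiset.mem_cons_of_mem, hq'])
        obtain ⟨k, y, hky, hpy⟩ := ihN m hmcard hmprimes
        refine ⟨k + 1, y, ?_, hpy⟩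
        have : (q ::ₘ a ::ₘ l'').prod = p * m.prod := by
          simp only [hm, Multiset.prod_cons, ← hv]
          simp [mul_assoc, mul_comm, mul_left_comm]
        rw [this, hky, pow_succ]
        simp [mul_assoc, mul_comm, mul_left_comm]
    · exact ⟨0, l.prod, by simp, hdvd⟩

theorem exists_max_pow (hfact : HFact H) {p : H} (hp : PrEl p) (x : H) :
    ∃ k y, x = p ^ k * y ∧ ¬ p ∣ y := by
  rcases hfact x with hx | ⟨l, hl, rfl⟩
  · exact ⟨0, x, by simp, fun h => hp.1 (isUnit_of_dvd_unit h hx)⟩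
  · obtain ⟨k, y, h1, h2⟩ := exists_max_pow_aux hp (Multiset.card l) l le_rfl hl
    exact ⟨k, y, h1, h2⟩

theorem exists_simul (hfact : HFact H) :
    ∀ (r : ℕ) (p : Fin r → H), (∀ i, PrEl (p i)) → ∀ x : H,
      ∃ (e : Fin r → ℕ) (y : H), x = (∏ i, p i ^ e i) * y ∧ ∀ i, ¬ p i ∣ y := by
  intro r
  induction r with
  | zero => exact fun p _ x => ⟨fun i => i.elim0, x, by simp, fun i => i.elim0⟩
  | succ r ih =>
    intro p hp x
    obtain ⟨k, x₀, hx₀, hpx₀⟩ := exists_max_pow hfact (hp 0) x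
    obtain ⟨e', y, hy, hpy⟩ := ih (fun i => p i.succ) (fun i => hp i.succ) x₀
    refine ⟨Fin.cons k e', y, ?_, ?_⟩
    · rw [Fin.prod_univ_succ]
      simp only [Fin.cons_zero, Fin.cons_succ]
      rw [hx₀, hy]
      simp [mul_assoc]
    · intro i
      rcases Fin.eq_zero_or_eq_succ i with rfl | ⟨i', rfl⟩
      · intro h
        exact hpx₀ (h.trans ⟨∏ i, p i.succ ^ e' i, by rw [hy]; exact mul_comm _ _⟩)
      · exact hpy i'

theorem pow_mul_eq_pow_mul {p x y : H} (hp : PrEl p) {m n : ℕ}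
    (h : p ^ m * x = p ^ n * y) (hx : ¬ p ∣ x) (hy : ¬ p ∣ y) : m = n ∧ x = y := by
  have key : ∀ {a b : ℕ} {w z : H}, a ≤ b → p ^ a * w = p ^ b * z → ¬ p ∣ w → a = b ∧ w = z := by
    intro a b w z hab heq hw
    obtain ⟨d, rfl⟩ := Nat.le.dest hab
    rw [pow_add, mul_assoc] at heq
    have hwz : w = p ^ d * z := mul_left_cancel heq
    rcases Nat.eq_zero_or_pos d with rfl | hd
    · exact ⟨by simp, by simpa using hwz⟩
    · exfalso
      exact hw (hwz ▸ (Dvd.dvd.mul_right (dvd_pow_self p (Nat.pos_iff_ne_zero.mp hd)) z))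
  rcases le_total m n with hmn | hmn
  · exact key hmn h hx
  · obtain ⟨h1, h2⟩ := key hmn h.symm hy
    exact ⟨h1.symm, h2.symm⟩

end Aux4

section Aux5
variable {H : Type*} [CommMonoid H]

theorem prod_pair_Icc (a m : ℕ) (g : ℕ → H) :
    ∏ j ∈ Finset.Icc a m, (g (2*j) * g (2*j+1)) = ∏ i ∈ Finset.Icc (2*a) (2*m+1), g i := by
  classical
  have hbU : Finset.Icc (2*a) (2*m+1) = (Finset.Icc a m).biUnion (fun j => {2*j, 2*j+1}) := by
    ext i
    simp only [Finset.mem_Icc, Finset.mem_biUnion, Finset.mem_insert, Finset.mem_singleton]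
    constructor
    · intro ⟨h1, h2⟩
      exact ⟨i / 2, by omega, by omega⟩
    · rintro ⟨j, hj, rfl | rfl⟩ <;> omega
  rw [hbU, Finset.prod_biUnion]
  · exact Finset.prod_congr rfl fun j _ => by
      rw [Finset.prod_pair (by omega)]
  · intro x _ y _ hxy
    simp only [Finset.disjoint_left, Finset.mem_insert, Finset.mem_singleton]
    rintro i (rfl | rfl) <;> rintro (h | h) <;> omega

theorem prod_pair_Icc' (a m : ℕ) (ha : 1 ≤ a) (g : ℕ → H) :
    ∏ j ∈ Finset.Icc a m, (g (2*j-1) * g (2*j)) = ∏ i ∈ Finset.Icc (2*a-1) (2*m), g i := by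
  classical
  have hbU : Finset.Icc (2*a-1) (2*m) = (Finset.Icc a m).biUnion (fun j => {2*j-1, 2*j}) := by
    ext i
    simp only [Finset.mem_Icc, Finset.mem_biUnion, Finset.mem_insert, Finset.mem_singleton]
    constructor
    · intro ⟨h1, h2⟩
      exact ⟨(i+1) / 2, by omega, by omega⟩
    · rintro ⟨j, hj, rfl | rfl⟩ <;> omega
  rw [hbU, Finset.prod_biUnion]
  · exact Finset.prod_congr rfl fun j hj => by
      rw [Finset.prod_pair (by simp only [Finset.mem_Icc] at hj; omega)]
  · intro x hx y hy hxy
    simp only [Finset.mem_coe, Finset.mem_Icc] at hx hy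
    simp only [Finset.disjoint_left, Finset.mem_insert, Finset.mem_singleton]
    rintro i (rfl | rfl) <;> rintro (h | h) <;> omega

theorem prod_pow_eq_prod_tails (n : ℕ) (f : ℕ → H) :
    ∏ i ∈ Finset.Icc 1 n, f i ^ i = ∏ k ∈ Finset.Icc 1 n, ∏ i ∈ Finset.Icc k n, f i := by
  rw [Finset.prod_comm' (s' := fun i => Finset.Icc 1 i) (t' := Finset.Icc 1 n)
    (by intro k i; simp only [Finset.mem_Icc]; omega)]
  exact Finset.prod_congr rfl fun i _ => by
    rw [Finset.prod_const, Nat.card_Icc]; simp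

theorem card_odd_range (m : ℕ) :
    ((Finset.range m).filter (fun k => k % 2 = 1)).card = m / 2 := by
  induction m with
  | zero => simp
  | succ m ih =>
    rw [Finset.range_add_one, Finset.filter_insert]
    by_cases h : m % 2 = 1
    · rw [if_pos h, Finset.card_insert_of_notMem (by simp)]
      omega
    · rw [if_neg h]
      omega

theorem card_even_range (m : ℕ) :
    ((Finset.range m).filter (fun k => k % 2 = 0)).card = (m + 1) / 2 := by
  induction m with
  | zero => simp
  | succ m ih =>
    rw [Finset.range_add_one, Finset.filter_insert]
    by_cases h : m % 2 = 0
    · rw [if_pos h, Finset.card_insert_of_notMem (by simp)]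
      omega
    · rw [if_neg h]
      omega

theorem prod_fibers_subset {ι κ : Type*} [DecidableEq κ] [Fintype ι] (g : ι → κ)
    (S : Finset κ) (f : ι → H) [DecidablePred fun i => g i ∈ S] :
    ∏ k ∈ S, ∏ i ∈ Finset.univ.filter (fun i => g i = k), f i
      = ∏ i ∈ Finset.univ.filter (fun i => g i ∈ S), f i := by
  classical
  rw [← Finset.prod_biUnion]
  · apply Finset.prod_congr _ (fun _ _ => rfl)
    ext i
    simp
  · intro x _ y _ hxy
    simp only [Finset.disjoint_left, Finset.mem_filter]
    rintro i ⟨_, rfl⟩ ⟨_, h⟩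
    exact hxy h

end Aux5

section Main
variable {H : Type*} [CancelCommMonoid H]

theorem tail_lemma (hfact : HFact H) (M : Submonoid H)
    (hi : ∀ a b : H, Squarefree b → a ^ 2 * b ∈ M → a ∈ M ∧ a * b ∈ M) :
    ∀ n : ℕ, ∀ s : ℕ → H, (∀ i, Squarefree (s i)) →
      (∀ i j, i ≠ j → IsRelPrime (s i) (s j)) →
      (∀ i, i = 0 ∨ n < i → s i = 1) →
      (∏ i ∈ Finset.Icc 1 n, s i ^ i) ∈ M →
      ∀ k, (∏ i ∈ Finset.Icc k n, s i) ∈ M := by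
  intro n
  induction n using Nat.strong_induction_on with
  | _ n IH =>
  intro s hsq hrel hsupp hprod
  have h0 : ∀ k, 1 ≤ k → (∏ i ∈ Finset.Icc k n, s i) ∈ M := by
    rcases Nat.eq_zero_or_pos n with rfl | hn
    · intro k hk
      rw [Finset.Icc_eq_empty (by omega)]
      exact M.one_mem
    rcases eq_or_lt_of_le (show 1 ≤ n from hn) with h1 | h2
    · -- n = 1
      intro k hk
      rcases eq_or_lt_of_le hk with hk1 | hk2
      · rw [← hk1, ← h1]
        rw [← h1] at hprod
        simpa using hprod
      · rw [Finset.Icc_eq_empty (by omega)]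
        exact M.one_mem
    · -- n ≥ 2
      set A := ∏ i ∈ Finset.Icc 1 n, s i ^ (i / 2) with hAdef
      set B := ∏ i ∈ Finset.Icc 1 n, s i ^ (i % 2) with hBdef
      have hA2B : A ^ 2 * B = ∏ i ∈ Finset.Icc 1 n, s i ^ i := by
        rw [hAdef, hBdef, ← Finset.prod_pow, ← Finset.prod_mul_distrib]
        refine Finset.prod_congr rfl fun i _ => ?_
        rw [← pow_mul, ← pow_add]
        congr 1
        omega
      have hB : Squarefree B := by
        refine sq_prod_of_relprime hfact ?_ ?_
        · intro i _
          rcases Nat.mod_two_eq_zero_or_one i with h | h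
          · rw [h, pow_zero]; exact squarefree_one
          · rw [h, pow_one]; exact hsq i
        · intro i _ j _ hij
          exact (relprime_pow hfact ((relprime_pow hfact (hrel i j hij) _).symm) _).symm
      obtain ⟨hAM, hABM⟩ := hi A B hB (by rw [hA2B]; exact hprod)
      -- even tails
      set m := n / 2 with hmdef
      set t : ℕ → H := fun j => if j = 0 then 1 else s (2*j) * s (2*j+1) with htdef
      have ht1 : ∀ j, 1 ≤ j → t j = s (2*j) * s (2*j+1) := by
        intro j hj; simp only [htdef]; rw [if_neg (by omega)]
      have ht_sq : ∀ j, Squarefree (t j) := by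
        intro j
        rcases Nat.eq_zero_or_pos j with rfl | hj
        · simp only [htdef, if_pos rfl]; exact squarefree_one
        · rw [ht1 j hj]
          exact sq_mul_of_relprime hfact (hsq _) (hsq _) (hrel _ _ (by omega))
      have ht_rel : ∀ j j', j ≠ j' → IsRelPrime (t j) (t j') := by
        intro j j' hjj'
        rcases Nat.eq_zero_or_pos j with rfl | hj
        · simp only [htdef, if_pos rfl]; exact isRelPrime_one_left
        rcases Nat.eq_zero_or_pos j' with rfl | hj'
        · rw [show t 0 = 1 by simp [htdef]]; exact isRelPrime_one_right
        rw [ht1 j hj, ht1 j' hj']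
        refine relprime_mul_left hfact ?_ ?_
        · exact (relprime_mul_left hfact (hrel _ _ (by omega)).symm
            (hrel _ _ (by omega)).symm).symm
        · exact (relprime_mul_left hfact (hrel _ _ (by omega)).symm
            (hrel _ _ (by omega)).symm).symm
      have ht_supp : ∀ j, j = 0 ∨ m < j → t j = 1 := by
        intro j hj
        rcases hj with rfl | hj
        · simp [htdef]
        · rw [ht1 j (by omega)]
          rw [hsupp (2*j) (Or.inr (by omega)), hsupp (2*j+1) (Or.inr (by omega)), mul_one]
      have hAeq : ∏ j ∈ Finset.Icc 1 m, t j ^ j = A := by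
        have s1 : A = ∏ i ∈ Finset.Icc 1 (2*m+1), s i ^ (i / 2) := by
          refine Finset.prod_subset (Finset.Icc_subset_Icc le_rfl (by omega)) ?_
          intro i hi hni
          simp only [Finset.mem_Icc] at hi hni
          rw [hsupp i (Or.inr (by omega)), one_pow]
        have s2 : ∏ i ∈ Finset.Icc 1 (2*m+1), s i ^ (i / 2)
            = ∏ i ∈ Finset.Icc 2 (2*m+1), s i ^ (i / 2) := by
          refine (Finset.prod_subset (Finset.Icc_subset_Icc (by omega) le_rfl) ?_).symm
          intro i hi hni
          simp only [Finset.mem_Icc] at hi hni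
          have : i = 1 := by omega
          subst this
          norm_num
        have s3 : ∏ j ∈ Finset.Icc 1 m, (s (2*j) ^ ((2*j)/2) * s (2*j+1) ^ ((2*j+1)/2))
            = ∏ i ∈ Finset.Icc 2 (2*m+1), s i ^ (i / 2) := by
          have := prod_pair_Icc 1 m (fun i => s i ^ (i / 2))
          simpa using this
        rw [s1, s2, ← s3]
        refine Finset.prod_congr rfl fun j hj => ?_
        simp only [Finset.mem_Icc] at hj
        rw [ht1 j hj.1, mul_pow]
        congr 2 <;> omega
      have hIHt := IH m (by omega) t ht_sq ht_rel ht_supp (by rw [hAeq]; exact hAM)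
      have heven : ∀ j, 1 ≤ j → (∏ i ∈ Finset.Icc (2*j) n, s i) ∈ M := by
        intro j hj
        have e1 : ∏ i ∈ Finset.Icc (2*j) n, s i = ∏ i ∈ Finset.Icc (2*j) (2*m+1), s i := by
          refine Finset.prod_subset (Finset.Icc_subset_Icc le_rfl (by omega)) ?_
          intro i hi hni
          simp only [Finset.mem_Icc] at hi hni
          exact hsupp i (Or.inr (by omega))
        have e2 : ∏ j' ∈ Finset.Icc j m, (s (2*j') * s (2*j'+1))
            = ∏ i ∈ Finset.Icc (2*j) (2*m+1), s i := prod_pair_Icc j m s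
        have e3 : ∏ j' ∈ Finset.Icc j m, t j' = ∏ j' ∈ Finset.Icc j m, (s (2*j') * s (2*j'+1)) := by
          refine Finset.prod_congr rfl fun j' hj' => ?_
          simp only [Finset.mem_Icc] at hj'
          exact ht1 j' (by omega)
        rw [e1, ← e2, ← e3]
        exact hIHt j
      -- odd tails
      set m' := (n+1) / 2 with hm'def
      set t' : ℕ → H := fun j => if j = 0 then 1 else s (2*j-1) * s (2*j) with ht'def
      have ht'1 : ∀ j, 1 ≤ j → t' j = s (2*j-1) * s (2*j) := by
        intro j hj; simp only [ht'def]; rw [if_neg (by omega)]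
      have ht'_sq : ∀ j, Squarefree (t' j) := by
        intro j
        rcases Nat.eq_zero_or_pos j with rfl | hj
        · simp only [ht'def, if_pos rfl]; exact squarefree_one
        · rw [ht'1 j hj]
          exact sq_mul_of_relprime hfact (hsq _) (hsq _) (hrel _ _ (by omega))
      have ht'_rel : ∀ j j', j ≠ j' → IsRelPrime (t' j) (t' j') := by
        intro j j' hjj'
        rcases Nat.eq_zero_or_pos j with rfl | hj
        · simp only [ht'def, if_pos rfl]; exact isRelPrime_one_left
        rcases Nat.eq_zero_or_pos j' with rfl | hj'
        · rw [show t' 0 = 1 by simp [ht'def]]; exact isRelPrime_one_right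
        rw [ht'1 j hj, ht'1 j' hj']
        refine relprime_mul_left hfact ?_ ?_
        · exact (relprime_mul_left hfact (hrel _ _ (by omega)).symm
            (hrel _ _ (by omega)).symm).symm
        · exact (relprime_mul_left hfact (hrel _ _ (by omega)).symm
            (hrel _ _ (by omega)).symm).symm
      have ht'_supp : ∀ j, j = 0 ∨ m' < j → t' j = 1 := by
        intro j hj
        rcases hj with rfl | hj
        · simp [ht'def]
        · rw [ht'1 j (by omega)]
          rw [hsupp (2*j-1) (Or.inr (by omega)), hsupp (2*j) (Or.inr (by omega)), mul_one]
      have hABeq : ∏ j ∈ Finset.Icc 1 m', t' j ^ j = A * B := by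
        have s0 : A * B = ∏ i ∈ Finset.Icc 1 n, s i ^ ((i+1) / 2) := by
          rw [hAdef, hBdef, ← Finset.prod_mul_distrib]
          refine Finset.prod_congr rfl fun i _ => ?_
          rw [← pow_add]
          congr 1
          omega
        have s1 : ∏ i ∈ Finset.Icc 1 n, s i ^ ((i+1) / 2)
            = ∏ i ∈ Finset.Icc 1 (2*m'), s i ^ ((i+1) / 2) := by
          refine Finset.prod_subset (Finset.Icc_subset_Icc le_rfl (by omega)) ?_
          intro i hi hni
          simp only [Finset.mem_Icc] at hi hni
          rw [hsupp i (Or.inr (by omega)), one_pow]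
        have s3 : ∏ j ∈ Finset.Icc 1 m', (s (2*j-1) ^ ((2*j-1+1)/2) * s (2*j) ^ ((2*j+1)/2))
            = ∏ i ∈ Finset.Icc (2*1-1) (2*m'), s i ^ ((i+1) / 2) := by
          exact prod_pair_Icc' 1 m' le_rfl (fun i => s i ^ ((i+1) / 2))
        rw [s0, s1]
        rw [show (2*1-1 : ℕ) = 1 by norm_num] at s3
        rw [← s3]
        refine Finset.prod_congr rfl fun j hj => ?_
        simp only [Finset.mem_Icc] at hj
        rw [ht'1 j hj.1, mul_pow]
        congr 2 <;> omega
      have hIHt' := IH m' (by omega) t' ht'_sq ht'_rel ht'_supp (by rw [hABeq]; exact hABM)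
      have hodd : ∀ j, 1 ≤ j → (∏ i ∈ Finset.Icc (2*j-1) n, s i) ∈ M := by
        intro j hj
        have e1 : ∏ i ∈ Finset.Icc (2*j-1) n, s i = ∏ i ∈ Finset.Icc (2*j-1) (2*m'), s i := by
          refine Finset.prod_subset (Finset.Icc_subset_Icc le_rfl (by omega)) ?_
          intro i hi hni
          simp only [Finset.mem_Icc] at hi hni
          exact hsupp i (Or.inr (by omega))
        have e2 : ∏ j' ∈ Finset.Icc j m', (s (2*j'-1) * s (2*j'))
            = ∏ i ∈ Finset.Icc (2*j-1) (2*m'), s i := prod_pair_Icc' j m' hj s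
        have e3 : ∏ j' ∈ Finset.Icc j m', t' j'
            = ∏ j' ∈ Finset.Icc j m', (s (2*j'-1) * s (2*j')) := by
          refine Finset.prod_congr rfl fun j' hj' => ?_
          simp only [Finset.mem_Icc] at hj'
          exact ht'1 j' (by omega)
        rw [e1, ← e2, ← e3]
        exact hIHt' j
      intro k hk
      rcases Nat.even_or_odd k with ⟨j, hji⟩ | ⟨j, hji⟩
      · have := heven j (by omega)
        rwa [show 2*j = k by omega] at this
      · have := hodd (j+1) (by omega)
        rwa [show 2*(j+1)-1 = k by omega] at this
  intro k
  rcases Nat.eq_zero_or_pos k with rfl | hk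
  · have : ∏ i ∈ Finset.Icc 0 n, s i = ∏ i ∈ Finset.Icc 1 n, s i := by
      refine (Finset.prod_subset (Finset.Icc_subset_Icc (by omega) le_rfl) ?_).symm
      intro i hi hni
      simp only [Finset.mem_Icc] at hi hni
      exact hsupp i (Or.inl (by omega))
    rw [this]
    exact h0 1 le_rfl
  · exact h0 k hk

end Main

theorem stmt_8 {H : Type*} [CancelCommMonoid H]
    (hfact : ∀ a : H, IsUnit a ∨ ∃ l : Multiset H, (∀ p ∈ l, ¬ IsUnit p ∧ ∀ b c : H, p ∣ b * c → p ∣ b ∨ p ∣ c) ∧ l.prod = a)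
    (M : Submonoid H) (hunits : ∀ u : H, IsUnit u → u ∈ M) :
    (∀ a b : H, Squarefree b → a ^ 2 * b ∈ M → a ∈ M ∧ a * b ∈ M) ↔
    (∀ n : ℕ, 1 ≤ n → ∀ s : Fin n → H, (∀ i, Squarefree (s i)) →
      (∀ i j, i ≠ j → IsRelPrime (s i) (s j)) →
      (∏ i, (s i) ^ (i.val + 1)) ∈ M →
      ∀ k : Fin n, (∏ i ∈ Finset.univ.filter (fun i => k ≤ i), s i) ∈ M) := by
  classical
  have hfact' : HFact H := hfact
  constructor
  · intro hi n hn s hsq hrel hprodM k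
    set s' : ℕ → H := fun i => if h : 1 ≤ i ∧ i ≤ n then s ⟨i-1, by omega⟩ else 1 with hs'def
    have hs'in : ∀ i (h : 1 ≤ i ∧ i ≤ n), s' i = s ⟨i-1, by omega⟩ := by
      intro i h; simp only [hs'def]; rw [dif_pos h]
    have hs'out : ∀ i, ¬ (1 ≤ i ∧ i ≤ n) → s' i = 1 := by
      intro i h; simp only [hs'def]; rw [dif_neg h]
    have hsq' : ∀ i, Squarefree (s' i) := by
      intro i
      by_cases h : 1 ≤ i ∧ i ≤ n
      · rw [hs'in i h]; exact hsq _
      · rw [hs'out i h]; exact squarefree_one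
    have hrel' : ∀ i j, i ≠ j → IsRelPrime (s' i) (s' j) := by
      intro i j hij
      by_cases h1 : 1 ≤ i ∧ i ≤ n
      · by_cases h2 : 1 ≤ j ∧ j ≤ n
        · rw [hs'in i h1, hs'in j h2]
          exact hrel _ _ (by
            intro he
            apply hij
            have := congrArg Fin.val he
            simp only at this
            omega)
        · rw [hs'out j h2]; exact isRelPrime_one_right
      · rw [hs'out i h1]; exact isRelPrime_one_left
    have hsupp' : ∀ i, i = 0 ∨ n < i → s' i = 1 := by
      intro i hi
      exact hs'out i (by omega)
    have hprod' : (∏ i ∈ Finset.Icc 1 n, s' i ^ i) ∈ M := by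
      have heq1 : ∏ i ∈ Finset.Icc 1 n, s' i ^ i = ∏ i, (s i) ^ (i.val + 1) := by
        refine Finset.prod_nbij'
          (fun m => if h : m - 1 < n then (⟨m-1, h⟩ : Fin n) else ⟨0, by omega⟩)
          (fun i : Fin n => i.val + 1) ?_ ?_ ?_ ?_ ?_
        · intro a _; exact Finset.mem_univ _
        · intro i _; simp only [Finset.mem_Icc]; omega
        · intro a ha
          simp only [Finset.mem_Icc] at ha
          beta_reduce
          rw [dif_pos (by omega)]
          simp only [Fin.val_mk]
          omega
        · intro i _
          beta_reduce
          have h1 : i.val + 1 - 1 < n := by omega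
          rw [dif_pos h1]
          apply Fin.ext
          simp
        · intro a ha
          simp only [Finset.mem_Icc] at ha
          beta_reduce
          rw [hs'in a (by omega), dif_pos (by omega)]
          congr 1
          simp only [Fin.val_mk]
          omega
      rw [heq1]
      exact hprodM
    have hmem := tail_lemma hfact' M hi n s' hsq' hrel' hsupp' hprod' (k.val + 1)
    have heq : ∏ i ∈ Finset.Icc (k.val+1) n, s' i
        = ∏ i ∈ Finset.univ.filter (fun i => k ≤ i), s i := by
      refine Finset.prod_nbij'
        (fun m => if h : m - 1 < n then (⟨m-1, h⟩ : Fin n) else ⟨0, by omega⟩)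
        (fun i : Fin n => i.val + 1) ?_ ?_ ?_ ?_ ?_
      · intro a ha
        simp only [Finset.mem_Icc] at ha
        beta_reduce
        rw [dif_pos (by omega)]
        simp only [Finset.mem_filter, Finset.mem_univ, true_and, Fin.le_def, Fin.val_mk]
        omega
      · intro i hi
        simp only [Finset.mem_filter, Finset.mem_univ, true_and, Fin.le_def] at hi
        simp only [Finset.mem_Icc]
        omega
      · intro a ha
        simp only [Finset.mem_Icc] at ha
        beta_reduce
        rw [dif_pos (by omega)]
        simp only [Fin.val_mk]
        omega
      · intro i _
        beta_reduce
        have h1 : i.val + 1 - 1 < n := by omega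
        rw [dif_pos h1]
        apply Fin.ext
        simp
      · intro a ha
        simp only [Finset.mem_Icc] at ha
        beta_reduce
        rw [hs'in a (by omega), dif_pos (by omega)]
    rwa [heq] at hmem
  · intro h3 a b hb hab
    by_cases hcu : IsUnit (a ^ 2 * b)
    · have h1 : IsUnit (a * (a * b)) := by
        rw [← mul_assoc, ← sq]; exact hcu
      exact ⟨hunits a (isUnit_of_mul_isUnit_left h1),
        hunits _ (isUnit_of_mul_isUnit_right h1)⟩
    obtain ⟨r, p, e, u, hu, hp, he, hnassoc, hc⟩ := exists_rep hfact' (a^2*b)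
    have hr : 0 < r := by
      rcases Nat.eq_zero_or_pos r with rfl | h
      · exact absurd (by rw [hc]; simpa using hu) hcu
      · exact h
    obtain ⟨α, a₁, ha₁, hpa₁⟩ := exists_simul hfact' r p hp a
    obtain ⟨β, b₁, hb₁, hpb₁⟩ := exists_simul hfact' r p hp b
    have hceq : a^2*b = (∏ i, p i ^ (2 * α i + β i)) * (a₁^2 * b₁) := by
      have h2 : ∏ i, p i ^ (2 * α i + β i) = (∏ i, p i ^ α i)^2 * ∏ i, p i ^ β i := by
        rw [← Finset.prod_pow, ← Finset.prod_mul_distrib]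
        refine Finset.prod_congr rfl fun i _ => ?_
        rw [← pow_mul, ← pow_add]
        congr 1
        omega
      rw [ha₁, hb₁, h2, mul_pow]
      simp [mul_assoc, mul_comm, mul_left_comm]
    have hwdvd : a₁^2*b₁ ∣ a^2*b :=
      ⟨∏ i, p i ^ (2*α i + β i), by rw [hceq]; exact mul_comm _ _⟩
    have hw : IsUnit (a₁^2*b₁) := by
      apply isUnit_of_no_prel hfact'
      intro q hq hqw
      have hqc : q ∣ u * ∏ i, p i ^ e i := hc ▸ hqw.trans hwdvd
      rcases hq.2 _ _ hqc with hd | hd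
      · exact hq.1 (isUnit_of_dvd_unit hd hu)
      obtain ⟨i, _, hqi⟩ := prel_dvd_finset_prod hq hd
      have hassoc := assoc_of_prel_dvd_prel hq (hp i) (prel_dvd_pow hq hqi)
      have hpiw : p i ∣ a₁ * (a₁ * b₁) := by
        have hx : p i ∣ a₁^2*b₁ := hassoc.symm.dvd.trans hqw
        rwa [sq, mul_assoc] at hx
      rcases (hp i).2 _ _ hpiw with hd2 | hd2
      · exact hpa₁ i hd2
      rcases (hp i).2 _ _ hd2 with hd3 | hd3
      · exact hpa₁ i hd3
      · exact hpb₁ i hd3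
    have hw' : IsUnit (a₁ * (a₁ * b₁)) := by
      rw [← mul_assoc, ← sq]; exact hw
    have hwa : IsUnit a₁ := isUnit_of_mul_isUnit_left hw'
    have hwb : IsUnit b₁ := isUnit_of_mul_isUnit_right (isUnit_of_mul_isUnit_right hw')
    have hnd : ∀ (i : Fin r) (γ : Fin r → ℕ) (x : H), ¬ p i ∣ x →
        ¬ p i ∣ (∏ j ∈ Finset.univ.erase i, p j ^ γ j) * x := by
      intro i γ x hx hdvd
      rcases (hp i).2 _ _ hdvd with hd | hd
      · obtain ⟨j, hj, hd2⟩ := prel_dvd_finset_prod (hp i) hd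
        have hij : j ≠ i := (Finset.mem_erase.mp hj).1
        exact hnassoc i j (Ne.symm hij)
          (assoc_of_prel_dvd_prel (hp i) (hp j) (prel_dvd_pow (hp i) hd2))
      · exact hx hd
    have hee : ∀ i, e i = 2 * α i + β i := by
      intro i
      have h1 : a^2*b = p i ^ e i * ((∏ j ∈ Finset.univ.erase i, p j ^ e j) * u) := by
        rw [hc, ← Finset.mul_prod_erase Finset.univ (fun j => p j ^ e j) (Finset.mem_univ i)]
        simp [mul_assoc, mul_comm, mul_left_comm]
      have h2 : a^2*b = p i ^ (2*α i + β i) *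
          ((∏ j ∈ Finset.univ.erase i, p j ^ (2*α j + β j)) * (a₁^2*b₁)) := by
        rw [hceq, ← Finset.mul_prod_erase Finset.univ (fun j => p j ^ (2*α j + β j))
          (Finset.mem_univ i)]
        simp [mul_assoc, mul_comm, mul_left_comm]
      have hu1 : ¬ p i ∣ (∏ j ∈ Finset.univ.erase i, p j ^ e j) * u :=
        hnd i e u (fun h => (hp i).1 (isUnit_of_dvd_unit h hu))
      have hu2 : ¬ p i ∣ (∏ j ∈ Finset.univ.erase i, p j ^ (2*α j + β j)) * (a₁^2*b₁) :=
        hnd i _ _ (fun h => (hp i).1 (isUnit_of_dvd_unit h hw))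
      exact (pow_mul_eq_pow_mul (hp i) (h1.symm.trans h2) hu1 hu2).1
    have hβ : ∀ i, β i ≤ 1 := by
      intro i
      by_contra hgt
      push_neg at hgt
      have hdvd : p i * p i ∣ b := by
        have h1 : p i * p i ∣ p i ^ β i := by
          rw [← sq]; exact pow_dvd_pow (p i) (by omega)
        refine dvd_trans h1 ?_
        rw [hb₁]
        exact Dvd.dvd.mul_right
          (Finset.dvd_prod_of_mem (fun j => p j ^ β j) (Finset.mem_univ i)) b₁
      exact (hp i).1 (hb (p i) hdvd)
    set n := Finset.univ.sup e with hndef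
    have hen : ∀ i, e i ≤ n := fun i => Finset.le_sup (Finset.mem_univ i)
    have hn1 : 1 ≤ n := le_trans (he ⟨0, hr⟩) (hen ⟨0, hr⟩)
    have hgprop : ∀ i : Fin r, e i - 1 < n := fun i => by
      have h1 := he i; have h2 := hen i; omega
    set g : Fin r → Fin n := fun i => ⟨e i - 1, hgprop i⟩ with hgdef
    have hgval : ∀ i, (g i).val = e i - 1 := fun i => rfl
    set S : Fin n → H := fun k => ∏ i ∈ Finset.univ.filter (fun i => g i = k), p i with hSdef
    have hSval : ∀ k, S k = ∏ i ∈ Finset.univ.filter (fun i => g i = k), p i := fun k => rfl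
    have hprel : ∀ i j : Fin r, i ≠ j → IsRelPrime (p i) (p j) := fun i j hij =>
      relprime_of_not_assoc (hp i) (hp j) (hnassoc i j hij)
    have hSsq : ∀ k, Squarefree (S k) := fun k =>
      sq_prod_of_relprime hfact' (fun i _ => sq_of_prel (hp i))
        (fun i _ j _ hij => hprel i j hij)
    have hSrel : ∀ k k', k ≠ k' → IsRelPrime (S k) (S k') := by
      intro k k' hkk'
      rw [hSval k, hSval k']
      refine relprime_prod_prod hfact' ?_
      intro i hi j hj
      refine hprel i j ?_
      simp only [Finset.mem_filter] at hi hj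
      intro hij
      exact hkk' (by rw [← hi.2, ← hj.2, hij])
    have hprodpe : (∏ i, p i ^ e i) ∈ M := by
      have hUeq : ((hu.unit⁻¹ : Hˣ) : H) * (a^2*b) = ∏ i, p i ^ e i := by
        rw [hc]
        have h7 : u * ∏ i, p i ^ e i = (hu.unit : H) * ∏ i, p i ^ e i := by
          rw [hu.unit_spec]
        rw [h7, Units.inv_mul_cancel_left]
      rw [← hUeq]
      exact M.mul_mem (hunits _ (hu.unit⁻¹).isUnit) hab
    have hSprod : (∏ k : Fin n, S k ^ (k.val+1)) ∈ M := by
      have heq2 : ∏ k : Fin n, S k ^ (k.val+1) = ∏ i, p i ^ e i := by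
        rw [← Finset.prod_fiberwise_of_maps_to (g := g) (t := Finset.univ)
          (fun i _ => Finset.mem_univ (g i)) (fun i => p i ^ e i)]
        refine Finset.prod_congr rfl fun k _ => ?_
        rw [hSval k, ← Finset.prod_pow]
        refine Finset.prod_congr rfl fun i hi => ?_
        simp only [Finset.mem_filter] at hi
        congr 1
        have h4 := congrArg Fin.val hi.2
        rw [hgval i] at h4
        have h5 := he i
        omega
      rw [heq2]
      exact hprodpe
    have hT := h3 n hn1 S hSsq hSrel hSprod
    have hTM : ∀ k : Fin n,
        (∏ i ∈ Finset.univ.filter (fun i : Fin r => k.val + 1 ≤ e i), p i) ∈ M := by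
      intro k
      have hTeq : (∏ i ∈ Finset.univ.filter (fun i => k ≤ i), S i)
          = ∏ i ∈ Finset.univ.filter (fun i : Fin r => k.val + 1 ≤ e i), p i := by
        have h6 : ∀ i ∈ Finset.univ.filter (fun i => k ≤ i), S i
            = ∏ j ∈ Finset.univ.filter (fun j => g j = i), p j := fun i _ => hSval i
        rw [Finset.prod_congr rfl h6,
          prod_fibers_subset g (Finset.univ.filter (fun i => k ≤ i)) p]
        refine Finset.prod_congr ?_ (fun _ _ => rfl)
        ext i
        simp only [Finset.mem_filter, Finset.mem_univ, true_and, Fin.le_def, hgval i]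
        have h5 := he i
        omega
      exact hTeq ▸ hT k
    have hcard : ∀ (c ei : ℕ), ei ≤ n →
        (Finset.univ.filter (fun k : Fin n => k.val % 2 = c ∧ k.val + 1 ≤ ei)).card
          = ((Finset.range ei).filter (fun k => k % 2 = c)).card := by
      intro c ei hei
      rw [Finset.card_filter, Finset.card_filter,
        Fin.sum_univ_eq_sum_range (fun k => if k % 2 = c ∧ k + 1 ≤ ei then 1 else 0) n,
        ← Finset.sum_subset (Finset.range_subset_range.mpr hei)
          (fun x hx hnx => by
            simp only [Finset.mem_range] at hx hnx
            rw [if_neg (by omega)])]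
      refine Finset.sum_congr rfl fun k hk => ?_
      simp only [Finset.mem_range] at hk
      by_cases h : k % 2 = c
      · rw [if_pos ⟨h, by omega⟩, if_pos h]
      · rw [if_neg (fun hand => h hand.1), if_neg h]
    have hkey : ∀ c : ℕ, (∏ k ∈ Finset.univ.filter (fun k : Fin n => k.val % 2 = c),
        ∏ i ∈ Finset.univ.filter (fun i : Fin r => k.val + 1 ≤ e i), p i)
        = ∏ i, p i ^ (((Finset.range (e i)).filter (fun k => k % 2 = c)).card) := by
      intro c
      rw [Finset.prod_comm' (s' := fun i : Fin r => Finset.univ.filter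
            (fun k : Fin n => (k.val % 2 = c) ∧ k.val + 1 ≤ e i)) (t' := Finset.univ)
        (by
          intro k i
          simp only [Finset.mem_filter, Finset.mem_univ, true_and]
          tauto)]
      refine Finset.prod_congr rfl fun i _ => ?_
      rw [Finset.prod_const, hcard c (e i) (hen i)]
    have hkeyM : ∀ c : ℕ,
        (∏ i, p i ^ (((Finset.range (e i)).filter (fun k => k % 2 = c)).card)) ∈ M := by
      intro c
      rw [← hkey c]
      exact Submonoid.prod_mem M (fun k hk => hTM k)
    constructor
    · have hoddM : (∏ i, p i ^ (e i / 2)) ∈ M := by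
        have h2 : ∏ i, p i ^ (((Finset.range (e i)).filter (fun k => k % 2 = 1)).card)
            = ∏ i, p i ^ (e i / 2) :=
          Finset.prod_congr rfl fun i _ => by rw [card_odd_range]
        rw [← h2]
        exact hkeyM 1
      have haeq : a = (∏ i, p i ^ (e i / 2)) * a₁ := by
        rw [ha₁]
        congr 1
        refine Finset.prod_congr rfl fun i _ => ?_
        congr 1
        have h1 := hee i
        have h2 := hβ i
        omega
      rw [haeq]
      exact M.mul_mem hoddM (hunits _ hwa)
    · have hevenM : (∏ i, p i ^ ((e i + 1) / 2)) ∈ M := by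
        have h2 : ∏ i, p i ^ (((Finset.range (e i)).filter (fun k => k % 2 = 0)).card)
            = ∏ i, p i ^ ((e i + 1) / 2) :=
          Finset.prod_congr rfl fun i _ => by rw [card_even_range]
        rw [← h2]
        exact hkeyM 0
      have habeq : a * b = (∏ i, p i ^ ((e i + 1) / 2)) * (a₁ * b₁) := by
        have hsum : ∏ i, p i ^ ((e i + 1)/2) = (∏ i, p i ^ α i) * ∏ i, p i ^ β i := by
          rw [← Finset.prod_mul_distrib]
          refine Finset.prod_congr rfl fun i _ => ?_
          rw [← pow_add]
          congr 1
          have h1 := hee i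
          have h2 := hβ i
          omega
        rw [ha₁, hb₁, hsum]
        simp [mul_assoc, mul_comm, mul_left_comm]
      rw [habeq]
      exact M.mul_mem hevenM (hunits _ (hwa.mul hwb))
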